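/- If Â ⊂ B̂ are two distinct intervals modulo n with ∅ ≠ Â and B̂ ≠ Z/nZ, then the number of maximal chains of intervals L_1 ⊂ ... ⊂ L_n (|L_i| = i) containing both Â and B̂ is at most 2^(n−3). -/

import Mathlib

/-- `S` is an interval of consecutive residues modulo `n`. -/
def IsCyclicInterval (n : ℕ) (S : Finset (ZMod n)) : Prop :=
  ∃ k : ZMod n, ∃ m : ℕ, S = (Finset.range m).image (fun i : ℕ => k + (i : ZMod n))

/-- `L` is a maximal chain of intervals mod `n`. -/
def IsIntervalChain (n : ℕ) (L : Fin n → Finset (ZMod n)) : Prop :=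
  (∀ i, (L i).card = (i : ℕ) + 1 ∧ IsCyclicInterval n (L i)) ∧ ∀ i j : Fin n, i < j → L i ⊂ L j

namespace Stmt13Aux

set_option linter.unusedSectionVars false

variable {n : ℕ} [NeZero n]

def itv (n : ℕ) (k : ZMod n) (m : ℕ) : Finset (ZMod n) :=
  (Finset.range m).image (fun i : ℕ => k + (i : ZMod n))

lemma mem_itv {k x : ZMod n} {m : ℕ} (hm : m ≤ n) :
    x ∈ itv n k m ↔ (x - k).val < m := by
  simp only [itv, Finset.mem_image, Finset.mem_range]
  constructor
  · rintro ⟨i, hi, rfl⟩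
    have : (k + (i:ZMod n) - k) = (i : ZMod n) := by ring
    rw [this, ZMod.val_cast_of_lt (lt_of_lt_of_le hi hm)]
    exact hi
  · intro h
    refine ⟨(x - k).val, h, ?_⟩
    rw [ZMod.natCast_val, ZMod.cast_id]
    ring

lemma card_itv {k : ZMod n} {m : ℕ} (hm : m ≤ n) : (itv n k m).card = m := by
  rw [itv, Finset.card_image_of_injOn, Finset.card_range]
  intro i hi j hj hij
  simp only [Finset.coe_range, Set.mem_Iio] at hi hj
  have hc : (i : ZMod n) = (j : ZMod n) := by simpa using hij
  have : (i : ZMod n).val = (j : ZMod n).val := congrArg ZMod.val hc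
  rwa [ZMod.val_cast_of_lt (lt_of_lt_of_le hi hm),
    ZMod.val_cast_of_lt (lt_of_lt_of_le hj hm)] at this

lemma self_sub_eq_natCast_val (k k' : ZMod n) : k - k' = (((k - k').val : ℕ) : ZMod n) := by
  rw [ZMod.natCast_val, ZMod.cast_id]

lemma neg_one_val : (-1 : ZMod n).val = n - 1 := by
  have h1 : 1 ≤ n := Nat.one_le_iff_ne_zero.mpr (NeZero.ne n)
  have : (-1 : ZMod n) = ((n - 1 : ℕ) : ZMod n) := by
    have hs := ZMod.natCast_self n
    rw [Nat.cast_sub h1]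
    push_cast
    linear_combination -hs
  rw [this, ZMod.val_cast_of_lt (by omega)]

lemma itv_left_unique {k k' : ZMod n} {m : ℕ} (h0 : 0 < m) (hm : m < n)
    (h : itv n k m = itv n k' m) : k = k' := by
  have hk : k ∈ itv n k' m := by
    rw [← h, mem_itv hm.le]; simpa using h0
  rw [mem_itv hm.le] at hk
  by_contra hne
  have hd : k - k' ≠ 0 := sub_ne_zero_of_ne hne
  have hv1 : 1 ≤ (k - k').val := by
    rcases Nat.eq_zero_or_pos (k - k').val with h0' | hp
    · exact absurd ((ZMod.val_eq_zero _).mp h0') hd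
    · exact hp
  have hkk := self_sub_eq_natCast_val k k'
  have h1 : k - 1 ∈ itv n k' m := by
    rw [mem_itv hm.le]
    have he : k - 1 - k' = ((((k - k').val - 1 : ℕ)) : ZMod n) := by
      rw [Nat.cast_sub hv1]
      push_cast
      linear_combination hkk
    rw [he, ZMod.val_cast_of_lt (by have := ZMod.val_lt (k - k'); omega)]
    omega
  rw [← h, mem_itv hm.le] at h1
  have he2 : (k - 1 - k) = (-1 : ZMod n) := by ring
  rw [he2, neg_one_val] at h1
  omega

lemma itv_subset_of_le {k : ZMod n} {m m' : ℕ} (h : m ≤ m') : itv n k m ⊆ itv n k m' :=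
  Finset.image_subset_image (Finset.range_subset_range.mpr h)

lemma interval_eq_itv {S : Finset (ZMod n)} (hS : IsCyclicInterval n S)
    (h : S.card < n) : ∃ k, S = itv n k S.card := by
  obtain ⟨k, m, rfl⟩ := hS
  have hS' : (Finset.range m).image (fun i : ℕ => k + (i : ZMod n)) = itv n k m := rfl
  rw [hS'] at h ⊢
  rcases le_or_gt m n with hm | hm
  · rw [card_itv hm]
    exact ⟨k, rfl⟩
  · exfalso
    have hsub : itv n k n ⊆ itv n k m := itv_subset_of_le hm.le
    have := Finset.card_le_card hsub
    rw [card_itv le_rfl] at this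
    omega

lemma cover {k k' : ZMod n} {m : ℕ} (h1 : 1 ≤ m) (h2 : m + 1 < n)
    (hsub : itv n k m ⊆ itv n k' (m + 1)) : k = k' ∨ k = k' + 1 := by
  have hn : m ≤ n := by omega
  have hkk := self_sub_eq_natCast_val k k'
  have hk : k ∈ itv n k' (m+1) := by
    apply hsub
    rw [mem_itv hn]
    simpa using (show 0 < m by omega)
  rw [mem_itv (by omega)] at hk
  rcases (show (k - k').val = 0 ∨ (k - k').val = 1 ∨ 2 ≤ (k - k').val by omega)
    with h0 | hone | hge
  · left
    have : k - k' = 0 := by rw [hkk, h0]; simp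
    linear_combination this
  · right
    have : k - k' = 1 := by rw [hkk, hone]; simp
    linear_combination this
  · exfalso
    set d := (k - k').val with hd
    have hdn : d < n := ZMod.val_lt _
    obtain ⟨j, hjm, hdj1, hdj2⟩ : ∃ j : ℕ, j < m ∧ m + 1 ≤ d + j ∧ d + j < n := by
      rcases Nat.lt_or_ge (d + m - 1) n with hA | hB
      · exact ⟨m - 1, by omega, by omega, by omega⟩
      · exact ⟨n - 1 - d, by omega, by omega, by omega⟩
    have hmem : k + (j : ZMod n) ∈ itv n k m := by
      rw [mem_itv hn]
      have hj : k + (j : ZMod n) - k = (j : ZMod n) := by ring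
      rw [hj, ZMod.val_cast_of_lt (by omega)]
      exact hjm
    have hT := hsub hmem
    rw [mem_itv (by omega)] at hT
    have he : k + (j : ZMod n) - k' = ((d + j : ℕ) : ZMod n) := by
      push_cast
      linear_combination hkk
    rw [he, ZMod.val_cast_of_lt hdj2] at hT
    omega

/-- The direction bit: `S` and `T` share the same left endpoint. -/
def bitP (n : ℕ) (S T : Finset (ZMod n)) (m : ℕ) : Prop :=
  ∃ k : ZMod n, S = itv n k m ∧ T = itv n k (m + 1)

lemma bitP_iff {S T : Finset (ZMod n)} {kS kT : ZMod n} {m : ℕ} (h1 : 1 ≤ m) (h2 : m + 1 < n)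
    (hS : S = itv n kS m) (hT : T = itv n kT (m + 1)) :
    bitP n S T m ↔ kS = kT := by
  constructor
  · rintro ⟨k, hS', hT'⟩
    have hk : k = kT := itv_left_unique (by omega) h2 (hT'.symm.trans hT)
    exact (itv_left_unique h1 (by omega) (hS.symm.trans hS')).trans hk
  · rintro rfl
    exact ⟨kS, hS, hT⟩

lemma recon_down {S S' T : Finset (ZMod n)} {m : ℕ} (h1 : 1 ≤ m) (h2 : m + 1 < n)
    (hS : ∃ k, S = itv n k m) (hS' : ∃ k, S' = itv n k m) (hT : ∃ k, T = itv n k (m + 1))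
    (hST : S ⊆ T) (hS'T : S' ⊆ T) (hb : bitP n S T m ↔ bitP n S' T m) : S = S' := by
  obtain ⟨kS, rfl⟩ := hS
  obtain ⟨kS', rfl⟩ := hS'
  obtain ⟨kT, rfl⟩ := hT
  haveI : Fact (1 < n) := ⟨by omega⟩
  rw [bitP_iff h1 h2 rfl rfl, bitP_iff h1 h2 rfl rfl] at hb
  rcases cover h1 h2 hST with h | h <;> rcases cover h1 h2 hS'T with h' | h'
  · rw [h, h']
  · exfalso
    have hc : kS' = kT := hb.mp h
    have : (1 : ZMod n) = 0 := by linear_combination hc - h'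
    exact one_ne_zero this
  · exfalso
    have hc : kS = kT := hb.mpr h'
    have : (1 : ZMod n) = 0 := by linear_combination hc - h
    exact one_ne_zero this
  · rw [h, h']

lemma recon_up {S T T' : Finset (ZMod n)} {m : ℕ} (h1 : 1 ≤ m) (h2 : m + 1 < n)
    (hS : ∃ k, S = itv n k m) (hT : ∃ k, T = itv n k (m + 1)) (hT' : ∃ k, T' = itv n k (m + 1))
    (hST : S ⊆ T) (hST' : S ⊆ T') (hb : bitP n S T m ↔ bitP n S T' m) : T = T' := by
  obtain ⟨kS, rfl⟩ := hS
  obtain ⟨kT, rfl⟩ := hT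
  obtain ⟨kT', rfl⟩ := hT'
  haveI : Fact (1 < n) := ⟨by omega⟩
  rw [bitP_iff h1 h2 rfl rfl, bitP_iff h1 h2 rfl rfl] at hb
  rcases cover h1 h2 hST with h | h <;> rcases cover h1 h2 hST' with h' | h'
  · rw [← h, ← h']
  · exfalso
    have hc : kS = kT' := hb.mp h
    have : (1 : ZMod n) = 0 := by linear_combination hc - h'
    exact one_ne_zero this
  · exfalso
    have hc : kS = kT := hb.mpr h'
    have : (1 : ZMod n) = 0 := by linear_combination hc - h
    exact one_ne_zero this
  · have : kT = kT' := by linear_combination h' - h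
    rw [this]

end Stmt13Aux

namespace Stmt13Aux
set_option linter.unusedSectionVars false
variable {n : ℕ} [NeZero n]

lemma chain_int {L : Fin n → Finset (ZMod n)} (hL : IsIntervalChain n L) {i : ℕ}
    (h : i + 1 < n) : ∃ k, L ⟨i, by omega⟩ = itv n k (i + 1) := by
  have hc := (hL.1 ⟨i, by omega⟩).1
  have := interval_eq_itv (hL.1 ⟨i, by omega⟩).2 (by rw [hc]; exact h)
  rwa [hc] at this

lemma chain_sub {L : Fin n → Finset (ZMod n)} (hL : IsIntervalChain n L) {i : ℕ}
    (h : i + 1 < n) : L ⟨i, by omega⟩ ⊆ L ⟨i + 1, by omega⟩ :=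
  (hL.2 ⟨i, by omega⟩ ⟨i + 1, by omega⟩ (by exact Fin.mk_lt_mk.mpr (Nat.lt_succ_self i))).subset

lemma chain_eq_down {L M : Fin n → Finset (ZMod n)}
    (hL : IsIntervalChain n L) (hM : IsIntervalChain n M)
    {u v : ℕ} (hv : v + 1 < n)
    (hbits : ∀ i (_ : u ≤ i) (_ : i < v),
      (bitP n (L ⟨i, by omega⟩) (L ⟨i + 1, by omega⟩) (i + 1) ↔
        bitP n (M ⟨i, by omega⟩) (M ⟨i + 1, by omega⟩) (i + 1)))
    (htop : L ⟨v, by omega⟩ = M ⟨v, by omega⟩) :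
    ∀ i (_ : u ≤ i) (_ : i ≤ v), L ⟨i, by omega⟩ = M ⟨i, by omega⟩ := by
  have key : ∀ d i (_ : u ≤ i) (_ : i + d = v), L ⟨i, by omega⟩ = M ⟨i, by omega⟩ := by
    intro d
    induction d with
    | zero =>
      intro i hi hd
      have : i = v := by omega
      subst this
      exact htop
    | succ d ih =>
      intro i hi hd
      have hT : L ⟨i + 1, by omega⟩ = M ⟨i + 1, by omega⟩ := ih (i + 1) (by omega) (by omega)
      have hsubL : L ⟨i, by omega⟩ ⊆ L ⟨i + 1, by omega⟩ := chain_sub hL (by omega)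
      have hsubM : M ⟨i, by omega⟩ ⊆ M ⟨i + 1, by omega⟩ := chain_sub hM (by omega)
      rw [← hT] at hsubM
      have hb := hbits i hi (by omega)
      rw [← hT] at hb
      exact recon_down (by omega) (by omega) (chain_int hL (by omega)) (chain_int hM (by omega))
        (chain_int hL (i := i + 1) (by omega)) hsubL hsubM hb
  intro i hi hiv
  exact key (v - i) i hi (by omega)

lemma chain_eq_up {L M : Fin n → Finset (ZMod n)}
    (hL : IsIntervalChain n L) (hM : IsIntervalChain n M)
    {u v : ℕ} (hv : v + 1 < n)
    (hbits : ∀ i (_ : u ≤ i) (_ : i < v),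
      (bitP n (L ⟨i, by omega⟩) (L ⟨i + 1, by omega⟩) (i + 1) ↔
        bitP n (M ⟨i, by omega⟩) (M ⟨i + 1, by omega⟩) (i + 1)))
    (hvu : u ≤ v)
    (hbase : L ⟨u, by omega⟩ = M ⟨u, by omega⟩) :
    ∀ i (_ : u ≤ i) (_ : i ≤ v), L ⟨i, by omega⟩ = M ⟨i, by omega⟩ := by
  intro i hi
  induction i, hi using Nat.le_induction with
  | base => intro _; exact hbase
  | succ i hi ih =>
    intro hiv
    have hS : L ⟨i, by omega⟩ = M ⟨i, by omega⟩ := ih (by omega)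
    have hsubL : L ⟨i, by omega⟩ ⊆ L ⟨i + 1, by omega⟩ := chain_sub hL (by omega)
    have hsubM : M ⟨i, by omega⟩ ⊆ M ⟨i + 1, by omega⟩ := chain_sub hM (by omega)
    rw [hS] at hsubL
    have hb := hbits i hi (by omega)
    rw [hS] at hb
    exact recon_up (by omega) (by omega) (chain_int hM (by omega))
      (chain_int hL (i := i + 1) (by omega)) (chain_int hM (i := i + 1) (by omega))
      hsubL hsubM hb

end Stmt13Aux

open Stmt13Aux

theorem stmt_13 (n : ℕ) [NeZero n] (hn : 3 ≤ n) (A B : Finset (ZMod n))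
    (hA : IsCyclicInterval n A) (hB : IsCyclicInterval n B) (hAB : A ⊂ B)
    (hAne : A ≠ ∅) (hBne : B ≠ Finset.univ) :
    Nat.card {L : Fin n → Finset (ZMod n) //
        IsIntervalChain n L ∧ (∃ i, L i = A) ∧ ∃ j, L j = B}
      ≤ 2 ^ (n - 3) := by
  classical
  set a := A.card with haA
  set b := B.card with hbB
  have ha1 : 1 ≤ a := Finset.card_pos.mpr (Finset.nonempty_iff_ne_empty.mpr hAne)
  have hab : a < b := Finset.card_lt_card hAB
  have hbn : b < n := by
    have hsub : B ⊂ Finset.univ := Finset.ssubset_univ_iff.mpr hBne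
    have := Finset.card_lt_card hsub
    simpa [Finset.card_univ, ZMod.card] using this
  set e : Fin (n - 3) → ℕ := fun j => if (j : ℕ) < a - 1 then (j : ℕ) else (j : ℕ) + 1
    with he_def
  have he : ∀ j : Fin (n - 3), e j + 3 ≤ n := by
    intro j
    have := j.isLt
    simp only [he_def]
    split <;> omega
  set f : {L : Fin n → Finset (ZMod n) //
        IsIntervalChain n L ∧ (∃ i, L i = A) ∧ ∃ j, L j = B} → (Fin (n - 3) → Bool) :=
    fun Lc j => decide (bitP n (Lc.1 ⟨e j, by have := he j; omega⟩)
      (Lc.1 ⟨e j + 1, by have := he j; omega⟩) (e j + 1)) with hf_def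
  have hinj : Function.Injective f := by
    rintro ⟨L, hL, ⟨iA, hiA⟩, ⟨jB, hjB⟩⟩ ⟨M, hM, ⟨iA', hiA'⟩, ⟨jB', hjB'⟩⟩ hfeq
    simp only [Subtype.mk.injEq]
    -- pin the positions of A and B in the chains
    have pin : ∀ (L : Fin n → Finset (ZMod n)) (_ : IsIntervalChain n L)
        (C : Finset (ZMod n)) (i : Fin n) (_ : L i = C) (_ : 1 ≤ C.card) (_ : C.card ≤ n),
        L ⟨C.card - 1, by omega⟩ = C := by
      intro L hL C i hi h1 hcn
      have hc := (hL.1 i).1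
      rw [hi] at hc
      have hv : (i : ℕ) = C.card - 1 := by omega
      have : (⟨C.card - 1, by omega⟩ : Fin n) = i := Fin.ext (by simp [hv])
      rw [this, hi]
    have hLA : L ⟨a - 1, by omega⟩ = A := pin L hL A iA hiA ha1 (by omega)
    have hMA : M ⟨a - 1, by omega⟩ = A := pin M hM A iA' hiA' ha1 (by omega)
    have hLB : L ⟨b - 1, by omega⟩ = B := pin L hL B jB hjB (by omega) (by omega)
    have hMB : M ⟨b - 1, by omega⟩ = B := pin M hM B jB' hjB' (by omega) (by omega)
    have hbits : ∀ i (_ : i + 3 ≤ n) (_ : i ≠ a - 1),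
        (bitP n (L ⟨i, by omega⟩) (L ⟨i + 1, by omega⟩) (i + 1) ↔
          bitP n (M ⟨i, by omega⟩) (M ⟨i + 1, by omega⟩) (i + 1)) := by
      intro i hi hne
      have hj : ∃ j : Fin (n - 3), e j = i := by
        rcases Nat.lt_or_ge i (a - 1) with h | h
        · refine ⟨⟨i, by omega⟩, ?_⟩
          show (if i < a - 1 then i else i + 1) = i
          rw [if_pos h]
        · refine ⟨⟨i - 1, by omega⟩, ?_⟩
          show (if i - 1 < a - 1 then i - 1 else i - 1 + 1) = i
          rw [if_neg (by omega)]
          omega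
      obtain ⟨j, hj⟩ := hj
      have hfj := congrFun hfeq j
      simp only [hf_def] at hfj
      rw [decide_eq_decide] at hfj
      subst hj
      exact hfj
    funext i
    obtain ⟨iv, hlt⟩ := i
    by_cases h1 : iv ≤ a - 1
    · exact chain_eq_down hL hM (u := 0) (v := a - 1) (by omega)
        (fun i hi hiv => hbits i (by omega) (by omega)) (hLA.trans hMA.symm) iv (by omega) h1
    · by_cases h2 : iv ≤ b - 1
      · exact chain_eq_down hL hM (u := a) (v := b - 1) (by omega)
          (fun i hi hiv => hbits i (by omega) (by omega)) (hLB.trans hMB.symm) iv (by omega) h2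
      · by_cases h3 : iv ≤ n - 2
        · exact chain_eq_up hL hM (u := b - 1) (v := n - 2) (by omega)
            (fun i hi hiv => hbits i (by omega) (by omega)) (by omega)
            (hLB.trans hMB.symm) iv (by omega) h3
        · have hv : iv = n - 1 := by omega
          have hcL := (hL.1 ⟨iv, hlt⟩).1
          have hcM := (hM.1 ⟨iv, hlt⟩).1
          have hval : ((⟨iv, hlt⟩ : Fin n) : ℕ) = iv := rfl
          rw [hval] at hcL hcM
          have hLu : L ⟨iv, hlt⟩ = Finset.univ :=
            Finset.eq_univ_of_card _ (by rw [ZMod.card]; omega)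
          have hMu : M ⟨iv, hlt⟩ = Finset.univ :=
            Finset.eq_univ_of_card _ (by rw [ZMod.card]; omega)
          rw [hLu, hMu]
  calc Nat.card {L : Fin n → Finset (ZMod n) //
        IsIntervalChain n L ∧ (∃ i, L i = A) ∧ ∃ j, L j = B}
      ≤ Nat.card (Fin (n - 3) → Bool) := Nat.card_le_card_of_injective f hinj
    _ = 2 ^ (n - 3) := by simp [Nat.card_eq_fintype_card]
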